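/- Every dyadic point x = K/2^N in (0,1) (K odd) is a local minimum of the Knopp function F: there exists ε > 0 such that F(y) ≥ F(x) for all y ∈ [0,1] with |y - x| < ε. Conversely, every local minimum of F on (0,1) is attained at a dyadic point. -/

import Mathlib

open Real MeasureTheory Filter Topology

noncomputable def phi (x : ℝ) : ℝ := |x - round x|

noncomputable def Knopp (α : ℝ) (x : ℝ) : ℝ :=
  ∑' j : ℕ, (2:ℝ) ^ (-(α * (j:ℝ))) * phi ((2:ℝ) ^ j * x)
def isDyadic (x : ℝ) : Prop := ∃ K N : ℕ, Odd K ∧ x = (K:ℝ) / 2 ^ N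

lemma phi_nonneg (x : ℝ) : 0 ≤ phi x := abs_nonneg _

lemma phi_le_half (x : ℝ) : phi x ≤ 1/2 := abs_sub_round x

lemma phi_intCast (n : ℤ) : phi (n:ℝ) = 0 := by
  simp [phi, round_intCast]

lemma phi_sub_int (x : ℝ) (n : ℤ) : phi (x - n) = phi x := by
  rw [phi, round_sub_intCast, phi]; push_cast; ring_nf

lemma phi_add_int (x : ℝ) (n : ℤ) : phi (x + n) = phi x := by
  have := phi_sub_int (x + n) n; simp at this; exact this.symm

lemma phi_min (x : ℝ) (n : ℤ) : phi x ≤ |x - n| := by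
  rw [phi, abs_sub_round_eq_min]
  rcases le_or_gt (n:ℝ) x with h | h
  · have h1 : (n:ℝ) ≤ ⌊x⌋ := by exact_mod_cast Int.le_floor.2 (by exact_mod_cast h)
    calc Int.fract x ⊓ (1 - Int.fract x) ≤ Int.fract x := inf_le_left
      _ = x - ⌊x⌋ := Int.self_sub_floor x ▸ rfl
      _ ≤ x - n := by linarith
      _ ≤ |x - n| := le_abs_self _
  · have h1 : (x:ℝ) < n := h
    have h2 : (⌊x⌋:ℝ) + 1 ≤ n := by exact_mod_cast Int.add_one_le_iff.2 (Int.floor_lt.2 (by exact_mod_cast h1))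
    calc Int.fract x ⊓ (1 - Int.fract x) ≤ 1 - Int.fract x := inf_le_right
      _ = ⌊x⌋ + 1 - x := by rw [Int.fract]; ring
      _ ≤ n - x := by linarith
      _ ≤ |x - n| := by rw [abs_sub_comm]; exact le_abs_self _

lemma phi_lip (x y : ℝ) : phi x ≤ phi y + |x - y| := by
  calc phi x ≤ |x - round y| := phi_min x (round y)
    _ ≤ |x - y| + |y - round y| := by
        have := abs_sub_le x y (round y); linarith [this]
    _ = phi y + |x - y| := by rw [phi]; ring

lemma phi_eq_self {s : ℝ} (h0 : 0 ≤ s) (h1 : s ≤ 1/2) : phi s = s := by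
  rcases lt_or_eq_of_le h1 with h | h
  · have : round s = 0 := by
      rw [round_eq, Int.floor_eq_zero_iff]
      constructor
      · simp; linarith
      · simp; linarith
    simp [phi, this, abs_of_nonneg h0]
  · subst h
    have hr : round ((1:ℝ)/2) = 1 := by norm_num [round_eq]
    rw [phi, hr]; norm_num

lemma phi_eq_one_sub {s : ℝ} (h0 : 1/2 ≤ s) (h1 : s ≤ 1) : phi s = 1 - s := by
  have : round s = 1 := by
    rw [round_eq]
    have : ⌊s + 1/2⌋ = 1 := by
      rw [Int.floor_eq_iff]
      constructor <;> push_cast <;> linarith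
    exact this
  rw [phi, this]
  push_cast
  rw [abs_of_nonpos (by linarith)]
  ring

lemma phi_abs {s : ℝ} (h : |s| ≤ 1/2) : phi s = |s| := by
  rcases le_or_gt 0 s with h0 | h0
  · rw [abs_of_nonneg h0] at h ⊢; exact phi_eq_self h0 h
  · rw [abs_of_neg h0] at h ⊢
    have : phi s = phi (s + 1) := by simpa using (phi_add_int s 1).symm
    rw [this, phi_eq_one_sub (by linarith) (by linarith)]
    ring

lemma rpow_term (α : ℝ) (j : ℕ) : (2:ℝ) ^ (-(α * (j:ℝ))) = ((2:ℝ)^(-α))^j := by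
  rw [← Real.rpow_natCast ((2:ℝ)^(-α)) j, ← Real.rpow_mul (by norm_num), neg_mul]

lemma c_pos (α : ℝ) : 0 < (2:ℝ)^(-α) := Real.rpow_pos_of_pos (by norm_num) _

lemma c_lt_one {α : ℝ} (hα : 0 < α) : (2:ℝ)^(-α) < 1 := by
  apply Real.rpow_lt_one_of_one_lt_of_neg (by norm_num) (by linarith)

lemma summable_knopp {α : ℝ} (hα : 0 < α) (y : ℝ) :
    Summable (fun j : ℕ => ((2:ℝ)^(-α))^j * phi ((2:ℝ)^j * y)) := by
  apply Summable.of_nonneg_of_le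
  · intro j; exact mul_nonneg (pow_nonneg (c_pos α).le _) (phi_nonneg _)
  · intro j
    calc ((2:ℝ)^(-α))^j * phi ((2:ℝ)^j * y) ≤ ((2:ℝ)^(-α))^j * (1/2) := by
          apply mul_le_mul_of_nonneg_left (phi_le_half _) (pow_nonneg (c_pos α).le _)
      _ = (1/2) * ((2:ℝ)^(-α))^j := by ring
  · exact (summable_geometric_of_lt_one (c_pos α).le (c_lt_one hα)).mul_left _

lemma knopp_eq (α : ℝ) (y : ℝ) :
    Knopp α y = ∑' j : ℕ, ((2:ℝ)^(-α))^j * phi ((2:ℝ)^j * y) := by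
  unfold Knopp
  exact tsum_congr fun j => by rw [rpow_term]

lemma b_gt_one {α : ℝ} (hα : 0 < α) (hα1 : α < 1) : 1 < 2 * (2:ℝ)^(-α) := by
  have h1 : (2:ℝ) * (2:ℝ)^(-α) = (2:ℝ)^(1-α) := by
    rw [show (1:ℝ) - α = 1 + (-α) by ring, Real.rpow_add (by norm_num), Real.rpow_one]
  rw [h1]
  exact Real.one_lt_rpow_iff_of_pos (by norm_num) |>.2 (Or.inl ⟨by norm_num, by linarith⟩)

set_option maxHeartbeats 1000000 in
lemma part1 (α : ℝ) (hα : 0 < α) (hα1 : α < 1) (K N : ℕ) (x : ℝ)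
    (hx : x = (K:ℝ) / 2 ^ N) :
    ∃ ε > 0, ∀ y : ℝ, |y - x| < ε → Knopp α x ≤ Knopp α y := by
  set c : ℝ := (2:ℝ)^(-α) with hc
  have hc0 : 0 < c := c_pos α
  have hc1 : c < 1 := c_lt_one hα
  set b : ℝ := 2 * c with hb
  have hb1 : 1 < b := b_gt_one hα hα1
  have hSy' : ∀ z : ℝ, Summable (fun j : ℕ => c^j * phi ((2:ℝ)^j * z)) := by
    intro z; rw [hc]; exact summable_knopp hα z
  have hKye : ∀ z : ℝ, Knopp α z = ∑' j : ℕ, c^j * phi ((2:ℝ)^j * z) := by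
    intro z; rw [hc]; exact knopp_eq α z
  clear_value c b
  clear hc
  obtain ⟨M, hM⟩ := pow_unbounded_of_one_lt (2:ℝ) hb1
  have hM1 : 1 ≤ M := by
    by_contra hM0
    interval_cases M
    · norm_num at hM
  refine ⟨1 / 2 ^ (N + M), by positivity, ?_⟩
  intro y hy
  set h : ℝ := y - x with hhdef
  clear_value h
  -- integrality: (2:ℝ)^(i+N) * x = K * 2^i
  have hint : ∀ i : ℕ, (2:ℝ)^(i+N) * x = ((K * 2^i : ℕ) : ℝ) := by
    intro i
    rw [hx]
    push_cast
    rw [pow_add]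
    field_simp
  -- tail of x is 0
  have hx_tail : ∀ i : ℕ, c^(i+N) * phi ((2:ℝ)^(i+N) * x) = 0 := by
    intro i
    rw [hint i, show ((K * 2^i : ℕ) : ℝ) = (((K * 2^i : ℕ) : ℤ) : ℝ) by push_cast; ring,
      phi_intCast, mul_zero]
  have hKx : Knopp α x = ∑ j ∈ Finset.range N, c^j * phi ((2:ℝ)^j * x) := by
    rw [hKye x, ← Summable.sum_add_tsum_nat_add N (hSy' x)]
    simp only [hx_tail, tsum_zero, add_zero]
  have hKy : Knopp α y
      = ∑ j ∈ Finset.range N, c^j * phi ((2:ℝ)^j * y) + ∑' i, c^(i+N) * phi ((2:ℝ)^(i+N) * y) := by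
    rw [hKye y, ← Summable.sum_add_tsum_nat_add N (hSy' y)]
  -- tail of y terms for i < M equal b^(i+N)/2^... : phi(2^(i+N) y) = 2^(i+N)|h|
  have habs : |h| < 1 / 2 ^ (N + M) := hy
  have htailterm : ∀ i ∈ Finset.range M, c^(i+N) * phi ((2:ℝ)^(i+N) * y) = b^(i+N) * |h| := by
    intro i hi
    have hiM : i < M := Finset.mem_range.1 hi
    have h1 : (2:ℝ)^(i+N) * y = (2:ℝ)^(i+N) * h + ((K * 2^i : ℕ) : ℤ) := by
      push_cast
      rw [hhdef]
      have := hint i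
      push_cast at this
      nlinarith [this]
    have h2 : |(2:ℝ)^(i+N) * h| ≤ 1/2 := by
      rw [abs_mul, abs_of_nonneg (by positivity : (0:ℝ) ≤ (2:ℝ)^(i+N))]
      have : (2:ℝ)^(i+N) * |h| ≤ 2^(N+M-1) * |h| := by
        apply mul_le_mul_of_nonneg_right _ (abs_nonneg _)
        apply pow_le_pow_right₀ (by norm_num)
        omega
      have h3 : (2:ℝ)^(N+M-1) * |h| < 2^(N+M-1) * (1/2^(N+M)) := by
        apply mul_lt_mul_of_pos_left habs (by positivity)
      have h4 : (2:ℝ)^(N+M-1) * (1/2^(N+M)) = 1/2 := by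
        have hNM : N + M = (N+M-1) + 1 := by omega
        rw [hNM, pow_succ]
        field_simp
        rw [Nat.add_sub_cancel]
      linarith
    rw [h1, phi_add_int, phi_abs h2, abs_mul,
      abs_of_nonneg (by positivity : (0:ℝ) ≤ (2:ℝ)^(i+N))]
    rw [hb, mul_pow]
    ring
  -- tail lower bound
  have htail : ∑ i ∈ Finset.range M, b^(i+N) * |h| ≤ ∑' i, c^(i+N) * phi ((2:ℝ)^(i+N) * y) := by
    rw [← Finset.sum_congr rfl htailterm]
    apply Summable.sum_le_tsum
    · intro i _; exact mul_nonneg (pow_nonneg hc0.le _) (phi_nonneg _)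
    · exact (summable_nat_add_iff N).2 (hSy' y)
  -- per-term Lipschitz
  have hlip : ∀ j ∈ Finset.range N,
      c^j * phi ((2:ℝ)^j * x) ≤ c^j * phi ((2:ℝ)^j * y) + b^j * |h| := by
    intro j _
    have := phi_lip ((2:ℝ)^j * x) ((2:ℝ)^j * y)
    have habs2 : |(2:ℝ)^j * x - (2:ℝ)^j * y| = 2^j * |h| := by
      rw [← mul_sub, abs_mul, abs_of_nonneg (by positivity : (0:ℝ) ≤ (2:ℝ)^j),
        abs_sub_comm, hhdef]
    rw [habs2] at this
    have h5 : c^j * phi ((2:ℝ)^j * x) ≤ c^j * (phi ((2:ℝ)^j * y) + 2^j * |h|) :=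
      mul_le_mul_of_nonneg_left this (pow_nonneg hc0.le _)
    rw [hb, mul_pow]
    nlinarith [pow_nonneg hc0.le j]
  -- geometric comparison
  have hgeom : ∑ j ∈ Finset.range N, b^j * |h| ≤ ∑ i ∈ Finset.range M, b^(i+N) * |h| := by
    rw [← Finset.sum_mul, ← Finset.sum_mul]
    apply mul_le_mul_of_nonneg_right _ (abs_nonneg _)
    have e1 : ∑ j ∈ Finset.range N, b^j = (b^N - 1)/(b-1) := geom_sum_eq (by linarith) N
    have e2 : ∑ i ∈ Finset.range M, b^(i+N) = b^N * ((b^M - 1)/(b-1)) := by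
      rw [← geom_sum_eq (by linarith) M, Finset.mul_sum]
      apply Finset.sum_congr rfl
      intro i _
      rw [pow_add]; ring
    rw [e1, e2]
    have hbN : (1:ℝ) ≤ b^N := one_le_pow₀ hb1.le
    rw [div_le_iff₀ (by linarith), mul_assoc, div_mul_cancel₀ _ (by linarith : b - 1 ≠ 0)]
    nlinarith
  calc Knopp α x = ∑ j ∈ Finset.range N, c^j * phi ((2:ℝ)^j * x) := hKx
    _ ≤ ∑ j ∈ Finset.range N, (c^j * phi ((2:ℝ)^j * y) + b^j * |h|) :=
        Finset.sum_le_sum hlip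
    _ = ∑ j ∈ Finset.range N, c^j * phi ((2:ℝ)^j * y) + ∑ j ∈ Finset.range N, b^j * |h| := by
        rw [Finset.sum_add_distrib]
    _ ≤ ∑ j ∈ Finset.range N, c^j * phi ((2:ℝ)^j * y) + ∑ i ∈ Finset.range M, b^(i+N) * |h| :=
        add_le_add_right hgeom _
    _ ≤ ∑ j ∈ Finset.range N, c^j * phi ((2:ℝ)^j * y) + ∑' i, c^(i+N) * phi ((2:ℝ)^(i+N) * y) :=
        add_le_add_right htail _
    _ = Knopp α y := hKy.symm

lemma phi_pos {t : ℝ} (h : ∀ m : ℤ, t ≠ m) : 0 < phi t := by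
  rcases (phi_nonneg t).lt_or_eq with h' | h'
  · exact h'
  · exfalso
    apply h (round t)
    have : |t - round t| = 0 := h'.symm
    have := abs_eq_zero.1 this
    linarith

lemma dyadic_nat : ∀ m : ℕ, ∀ N : ℕ, 0 < m → (m:ℝ)/2^N < 1 → isDyadic ((m:ℝ)/2^N) := by
  intro m
  induction m using Nat.strong_induction_on with
  | _ m ih =>
    intro N hm hlt
    rcases Nat.even_or_odd m with he | ho
    · obtain ⟨t, ht⟩ := he
      have ht2 : m = 2 * t := by omega
      have ht0 : 0 < t := by omega
      cases N with
      | zero =>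
        exfalso
        simp only [pow_zero, div_one] at hlt
        have : (1:ℝ) ≤ m := by exact_mod_cast hm
        linarith
      | succ N' =>
        have heq : (m:ℝ)/2^(N'+1) = (t:ℝ)/2^N' := by
          rw [ht2]; push_cast; rw [pow_succ]; field_simp
        rw [heq] at hlt ⊢
        exact ih t (by omega) N' ht0 hlt
    · exact ⟨m, N, ho, rfl⟩

lemma not_dyadic_int {x : ℝ} (hx0 : 0 < x) (hx1 : x < 1) (hnd : ¬ isDyadic x)
    (N : ℕ) (m : ℤ) : (2:ℝ)^N * x ≠ m := by
  intro he
  have hm0 : 0 < m := by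
    have : (0:ℝ) < m := by rw [← he]; positivity
    exact_mod_cast this
  have hxe : x = (m.toNat : ℝ) / 2^N := by
    have : ((m.toNat : ℤ) : ℝ) = (m:ℝ) := by rw [Int.toNat_of_nonneg hm0.le]
    push_cast at this
    rw [← this] at he
    field_simp at he ⊢
    linarith [he]
  apply hnd
  rw [hxe]
  apply dyadic_nat _ _ (by omega) (by rw [← hxe]; exact hx1)

set_option maxHeartbeats 1000000 in
lemma part2 (α : ℝ) (hα : 0 < α) (hα1 : α < 1) :
    ∀ x ∈ Set.Ioo (0:ℝ) 1,
      (∃ ε > 0, ∀ y ∈ Set.Icc (0:ℝ) 1, |y - x| < ε → Knopp α x ≤ Knopp α y) →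
      isDyadic x := by
  intro x hx hmin
  obtain ⟨hx0, hx1⟩ := hx
  by_contra hnd
  obtain ⟨ε, hε, hm⟩ := hmin
  have hni := not_dyadic_int hx0 hx1 hnd
  -- choose N
  obtain ⟨N, hN⟩ := exists_pow_lt_of_lt_one hε (by norm_num : (1:ℝ)/2 < 1)
  have hN' : (1:ℝ)/2^N < ε := by rwa [div_pow, one_pow] at hN
  set c : ℝ := (2:ℝ)^(-α) with hc
  have hc0 : 0 < c := c_pos α
  have hS : ∀ z : ℝ, Summable (fun j : ℕ => c^j * phi ((2:ℝ)^j * z)) := by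
    intro z; rw [hc]; exact summable_knopp hα z
  have hKe : ∀ z : ℝ, Knopp α z = ∑' j : ℕ, c^j * phi ((2:ℝ)^j * z) := by
    intro z; rw [hc]; exact knopp_eq α z
  clear_value c
  clear hc
  -- the dyadic neighbours
  set k : ℕ := (⌊(2:ℝ)^N * x⌋).toNat with hk
  clear_value k
  have hfl0 : (0:ℤ) ≤ ⌊(2:ℝ)^N * x⌋ := Int.floor_nonneg.2 (by positivity)
  have hkr : (k:ℝ) ≤ 2^N * x := by
    rw [hk]
    rw [show ((⌊(2:ℝ)^N * x⌋.toNat : ℕ) : ℝ) = ((⌊(2:ℝ)^N * x⌋ : ℤ) : ℝ) by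
      exact_mod_cast congrArg Int.cast (Int.toNat_of_nonneg hfl0)]
    exact Int.floor_le _
  have hkr2 : 2^N * x < (k:ℝ) + 1 := by
    rw [hk]
    rw [show ((⌊(2:ℝ)^N * x⌋.toNat : ℕ) : ℝ) = ((⌊(2:ℝ)^N * x⌋ : ℤ) : ℝ) by
      exact_mod_cast congrArg Int.cast (Int.toNat_of_nonneg hfl0)]
    exact Int.lt_floor_add_one _
  have hkx : (k:ℝ) < 2^N * x := by
    rcases lt_or_eq_of_le hkr with h | h
    · exact h
    · exact absurd h.symm (hni N (k:ℤ))
  have hkub : k + 1 ≤ 2^N := by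
    have h2 : (k:ℝ) < 2^N := by
      calc (k:ℝ) < 2^N * x := hkx
        _ < 2^N * 1 := by apply mul_lt_mul_of_pos_left hx1 (by positivity)
        _ = 2^N := mul_one _
    have : (k:ℕ) < 2^N := by exact_mod_cast h2
    omega
  set a : ℝ := (k:ℝ)/2^N with ha
  set b : ℝ := ((k:ℝ)+1)/2^N with hb
  clear_value a b
  have h2N : (0:ℝ) < 2^N := by positivity
  have hax : a < x := by rw [ha, div_lt_iff₀ h2N]; linarith [hkx]
  have hxb : x < b := by rw [hb, lt_div_iff₀ h2N]; linarith [hkr2]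
  have ha0 : 0 ≤ a := by rw [ha]; positivity
  have hb1' : b ≤ 1 := by
    rw [hb, div_le_one h2N]
    have : ((k:ℝ)+1) ≤ ((2^N : ℕ) : ℝ) := by exact_mod_cast hkub
    simpa using this
  have hba : b - a = 1/2^N := by rw [ha, hb]; ring
  -- local min at a and b
  have hFa : Knopp α x ≤ Knopp α a := by
    apply hm a ⟨ha0, by linarith⟩
    rw [abs_sub_lt_iff]
    constructor <;> [linarith; linarith]
  have hFb : Knopp α x ≤ Knopp α b := by
    apply hm b ⟨by linarith, hb1'⟩
    rw [abs_sub_lt_iff]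
    constructor <;> [linarith; linarith]
  -- tails of a and b vanish
  have htail_a : ∀ i : ℕ, c^(i+N) * phi ((2:ℝ)^(i+N) * a) = 0 := by
    intro i
    have : (2:ℝ)^(i+N) * a = ((k * 2^i : ℕ) : ℤ) := by
      rw [ha, pow_add]; push_cast; field_simp
    rw [this, phi_intCast, mul_zero]
  have htail_b : ∀ i : ℕ, c^(i+N) * phi ((2:ℝ)^(i+N) * b) = 0 := by
    intro i
    have : (2:ℝ)^(i+N) * b = (((k+1) * 2^i : ℕ) : ℤ) := by
      rw [hb, pow_add]; push_cast; field_simp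
    rw [this, phi_intCast, mul_zero]
  have hKa : Knopp α a = ∑ j ∈ Finset.range N, c^j * phi ((2:ℝ)^j * a) := by
    rw [hKe a, ← Summable.sum_add_tsum_nat_add N (hS a)]
    simp only [htail_a, tsum_zero, add_zero]
  have hKb : Knopp α b = ∑ j ∈ Finset.range N, c^j * phi ((2:ℝ)^j * b) := by
    rw [hKe b, ← Summable.sum_add_tsum_nat_add N (hS b)]
    simp only [htail_b, tsum_zero, add_zero]
  -- tail of x is positive
  set T : ℝ := ∑' i : ℕ, c^(i+N) * phi ((2:ℝ)^(i+N) * x) with hT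
  clear_value T
  have hKx : Knopp α x = ∑ j ∈ Finset.range N, c^j * phi ((2:ℝ)^j * x) + T := by
    rw [hKe x, ← Summable.sum_add_tsum_nat_add N (hS x), hT]
  have hT0 : 0 < T := by
    have hterm : 0 < c^(0+N) * phi ((2:ℝ)^(0+N) * x) := by
      apply mul_pos (pow_pos hc0 _)
      exact phi_pos (fun m => hni (0+N) m)
    calc (0:ℝ) < c^(0+N) * phi ((2:ℝ)^(0+N) * x) := hterm
      _ ≤ T := by
        rw [hT]
        have h1 : Summable (fun i : ℕ => c^(i+N) * phi ((2:ℝ)^(i+N) * x)) :=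
          (summable_nat_add_iff N).2 (hS x)
        exact Summable.le_tsum h1 0 (fun i _ => mul_nonneg (pow_nonneg hc0.le _) (phi_nonneg _))
  -- affinity on [a,b]
  have haff : ∀ j : ℕ, j < N → ∃ p q : ℝ, ∀ y : ℝ, a ≤ y → y ≤ b → phi ((2:ℝ)^j * y) = p * y + q := by
    intro j hj
    set d : ℕ := N - 1 - j with hd
    set m : ℕ := k / 2^d with hm'
    have hNd : N = d + j + 1 := by omega
    have hmod : k % 2^d < 2^d := Nat.mod_lt _ (by positivity)
    have hdiv : 2^d * m + k % 2^d = k := by rw [hm']; exact Nat.div_add_mod k (2^d)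
    clear_value m
    -- bounds: for y in [a,b], m ≤ 2^(j+1) y ≤ m+1
    have hlow : ∀ y : ℝ, a ≤ y → (m:ℝ) ≤ 2^(j+1) * y := by
      intro y hy
      have h1 : (m:ℝ) * 2^d ≤ k := by
        have : m * 2^d ≤ k := by
          calc m * 2^d = 2^d * m := Nat.mul_comm _ _
            _ ≤ 2^d * m + k % 2^d := Nat.le_add_right _ _
            _ = k := hdiv
        exact_mod_cast this
      have h2 : (2:ℝ)^(j+1) * a = (k:ℝ) / 2^d := by
        rw [ha, hNd]
        rw [show d + j + 1 = (j+1) + d by ring, pow_add]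
        field_simp
        rw [pow_add, pow_succ]
        ring
      have : (m:ℝ) ≤ 2^(j+1) * a := by
        rw [h2, le_div_iff₀ (by positivity : (0:ℝ) < 2^d)]
        exact h1
      calc (m:ℝ) ≤ 2^(j+1) * a := this
        _ ≤ 2^(j+1) * y := by apply mul_le_mul_of_nonneg_left hy (by positivity)
    have hhigh : ∀ y : ℝ, y ≤ b → 2^(j+1) * y ≤ (m:ℝ) + 1 := by
      intro y hy
      have h1 : (k:ℝ) + 1 ≤ ((m:ℝ) + 1) * 2^d := by
        have : k + 1 ≤ (m + 1) * 2^d := by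
          calc k + 1 = 2^d * m + (k % 2^d + 1) := by rw [← Nat.add_assoc, hdiv]
            _ ≤ 2^d * m + 2^d := Nat.add_le_add_left (Nat.succ_le_of_lt hmod) _
            _ = (m + 1) * 2^d := by ring
        exact_mod_cast this
      have h2 : (2:ℝ)^(j+1) * b = ((k:ℝ)+1) / 2^d := by
        rw [hb, hNd]
        rw [show d + j + 1 = (j+1) + d by ring, pow_add]
        field_simp
        rw [pow_add, pow_succ]
      have hby : 2^(j+1) * b ≤ (m:ℝ) + 1 := by
        rw [h2, div_le_iff₀ (by positivity : (0:ℝ) < 2^d)]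
        exact h1
      calc (2:ℝ)^(j+1) * y ≤ 2^(j+1) * b := by apply mul_le_mul_of_nonneg_left hy (by positivity)
        _ ≤ (m:ℝ) + 1 := hby
    rcases Nat.even_or_odd m with ⟨r, hr⟩ | ⟨r, hr⟩
    · -- m = 2r : phi(2^j y) = 2^j y - r
      refine ⟨2^j, -(r:ℝ), ?_⟩
      intro y hya hyb
      have hl := hlow y hya
      have hh := hhigh y hyb
      rw [hr] at hl hh
      push_cast at hl hh
      have h2jy : (2:ℝ)^(j+1) * y = 2 * (2^j * y) := by rw [pow_succ]; ring
      rw [h2jy] at hl hh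
      have : phi ((2:ℝ)^j * y) = phi ((2:ℝ)^j * y - (r:ℤ)) := (phi_sub_int _ _).symm
      rw [this, phi_eq_self (by push_cast; linarith) (by push_cast; linarith)]
      push_cast
      ring
    · -- m = 2r+1 : phi(2^j y) = (r+1) - 2^j y
      refine ⟨-(2^j), (r:ℝ)+1, ?_⟩
      intro y hya hyb
      have hl := hlow y hya
      have hh := hhigh y hyb
      rw [hr] at hl hh
      push_cast at hl hh
      have h2jy : (2:ℝ)^(j+1) * y = 2 * (2^j * y) := by rw [pow_succ]; ring
      rw [h2jy] at hl hh
      have : phi ((2:ℝ)^j * y) = phi ((2:ℝ)^j * y - (r:ℤ)) := (phi_sub_int _ _).symm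
      rw [this, phi_eq_one_sub (by push_cast; linarith) (by push_cast; linarith)]
      push_cast
      ring
  choose! p q hpq using haff
  set P : ℝ := ∑ j ∈ Finset.range N, c^j * p j with hP
  set Q : ℝ := ∑ j ∈ Finset.range N, c^j * q j with hQ
  clear_value P Q
  have hsum : ∀ z : ℝ, a ≤ z → z ≤ b →
      ∑ j ∈ Finset.range N, c^j * phi ((2:ℝ)^j * z) = P * z + Q := by
    intro z hza hzb
    rw [hP, hQ, Finset.sum_mul, ← Finset.sum_add_distrib]
    apply Finset.sum_congr rfl
    intro j hj
    rw [hpq j (Finset.mem_range.1 hj) z hza hzb]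
    ring
  have hSa : Knopp α a = P * a + Q := by rw [hKa, hsum a le_rfl (by linarith)]
  have hSb : Knopp α b = P * b + Q := by rw [hKb, hsum b (by linarith) le_rfl]
  have hSx : Knopp α x = P * x + Q + T := by rw [hKx, hsum x (by linarith) (by linarith)]
  rw [hSa, hSx] at hFa
  rw [hSb, hSx] at hFb
  rcases le_or_gt 0 P with hP0 | hP0
  · nlinarith
  · nlinarith

theorem knopp_local_minima (α : ℝ) (hα : 0 < α) (hα1 : α < 1) :
    (∀ x ∈ Set.Ioo (0:ℝ) 1, isDyadic x →
      ∃ ε > 0, ∀ y ∈ Set.Icc (0:ℝ) 1, |y - x| < ε → Knopp α x ≤ Knopp α y) ∧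
    (∀ x ∈ Set.Ioo (0:ℝ) 1,
      (∃ ε > 0, ∀ y ∈ Set.Icc (0:ℝ) 1, |y - x| < ε → Knopp α x ≤ Knopp α y) →
      isDyadic x) := by
  constructor
  · intro x _ hdy
    obtain ⟨K, N, _, hxe⟩ := hdy
    obtain ⟨ε, hε, h⟩ := part1 α hα hα1 K N x hxe
    exact ⟨ε, hε, fun y _ hy => h y hy⟩
  · exact part2 α hα hα1
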